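/- Let z : [0,N] → ℂᴺ be an H¹ path of N equal unit masses satisfying the choreography condition z_j(t) = z_0(j+t) (indices in ℤ/N, time extended N-periodically), and suppose Im z_0 vanishes at some point and Re z_0 vanishes at some point of [0,N]. Then the Lagrangian action A(z) = ∫₀ᴺ (½ Σ_j |ż_j|² + Σ_{j<k} |z_j − z_k|^{−1}) dt satisfies A(z) ≥ ‖z‖²_{H¹} / (2(N²+1)), where ‖z‖²_{H¹} = ∫₀ᴺ Σ_j (|z_j|² + |ż_j|²) dt. In particular, the action is coercive on this class of loops. -/

import Mathlib

open MeasureTheory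

/-- Cauchy–Schwarz for interval integrals via the expand-the-square trick. -/
lemma sq_integral_abs_le_aux (a : ℝ) (ha : 0 ≤ a) (g : ℝ → ℝ)
    (hg : IntervalIntegrable g volume 0 a)
    (hg2 : IntervalIntegrable (fun t => g t ^ 2) volume 0 a) :
    (∫ t in (0:ℝ)..a, |g t|) ^ 2 ≤ a * ∫ t in (0:ℝ)..a, g t ^ 2 := by
  rcases ha.eq_or_lt with h | h
  · simp [← h]
  set I := ∫ t in (0:ℝ)..a, |g t| with hI
  set J := ∫ t in (0:ℝ)..a, g t ^ 2 with hJ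
  set c := I / a with hc
  have habs : IntervalIntegrable (fun t => |g t|) volume 0 a := hg.abs
  have h1 : IntervalIntegrable (fun t => (2*c) * |g t|) volume 0 a := habs.const_mul _
  have h2 : IntervalIntegrable (fun t => g t ^ 2 - (2*c) * |g t|) volume 0 a := hg2.sub h1
  have key : (0:ℝ) ≤ ∫ t in (0:ℝ)..a, (|g t| - c)^2 :=
    intervalIntegral.integral_nonneg ha (fun u _ => sq_nonneg _)
  have expand : (∫ t in (0:ℝ)..a, (|g t| - c)^2) = J - (2*c)*I + a * c^2 := by
    have heq : (fun t => (|g t| - c)^2)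
        = fun t => (g t ^ 2 - (2*c) * |g t|) + c^2 := by
      funext t
      rw [sub_sq, sq_abs]
      ring
    rw [heq, intervalIntegral.integral_add h2 intervalIntegrable_const,
      intervalIntegral.integral_sub hg2 h1, intervalIntegral.integral_const_mul,
      intervalIntegral.integral_const]
    simp only [smul_eq_mul, hc]
    field_simp
    rw [← hI, ← hJ]; ring
  rw [expand] at key
  have hIc : I = c * a := by rw [hc, div_mul_cancel₀ I h.ne']
  nlinarith [key, sq_nonneg c]

/-- Poincaré-type inequality for a real function vanishing somewhere on `[0, a]`. -/
lemma poincare_aux (a : ℝ) (ha : 0 ≤ a) (u u' : ℝ → ℝ)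
    (hd : ∀ t, HasDerivAt u (u' t) t)
    (hint2 : IntervalIntegrable (fun t => u' t ^ 2) volume 0 a)
    (hint1 : IntervalIntegrable u' volume 0 a)
    (h0 : ∃ s ∈ Set.Icc (0:ℝ) a, u s = 0) :
    ∫ t in (0:ℝ)..a, u t ^ 2 ≤ a^2 * ∫ t in (0:ℝ)..a, u' t ^ 2 := by
  obtain ⟨s, hs, hus⟩ := h0
  set I := ∫ t in (0:ℝ)..a, |u' t| with hI
  set J := ∫ t in (0:ℝ)..a, u' t ^ 2 with hJ
  have hCS : I ^ 2 ≤ a * J := sq_integral_abs_le_aux a ha u' hint1 hint2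
  have habs : IntervalIntegrable (fun t => |u' t|) volume 0 a := hint1.abs
  have hIcc : Set.uIcc (0:ℝ) a = Set.Icc 0 a := Set.uIcc_of_le ha
  have hpt : ∀ t ∈ Set.Icc (0:ℝ) a, u t ^ 2 ≤ a * J := by
    intro t ht
    have hsub : IntervalIntegrable u' volume s t := by
      refine hint1.mono_set ?_
      rw [hIcc]
      exact Set.uIcc_subset_Icc hs ht
    have hftc : ∫ x in s..t, u' x = u t - u s :=
      intervalIntegral.integral_eq_sub_of_hasDerivAt (fun x _ => hd x) hsub
    have hut : u t = ∫ x in s..t, u' x := by rw [hftc, hus, sub_zero]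
    have h1 : |u t| ≤ I := by
      rw [hut]
      rcases le_total s t with hle | hle
      · calc |∫ x in s..t, u' x| ≤ ∫ x in s..t, |u' x| :=
            intervalIntegral.abs_integral_le_integral_abs hle
          _ ≤ I := intervalIntegral.integral_mono_interval hs.1 hle ht.2
              (Filter.Eventually.of_forall fun x => abs_nonneg _) habs
      · rw [intervalIntegral.integral_symm, abs_neg]
        calc |∫ x in t..s, u' x| ≤ ∫ x in t..s, |u' x| :=
            intervalIntegral.abs_integral_le_integral_abs hle
          _ ≤ I := intervalIntegral.integral_mono_interval ht.1 hle hs.2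
              (Filter.Eventually.of_forall fun x => abs_nonneg _) habs
    have hI0 : 0 ≤ I :=
      intervalIntegral.integral_nonneg ha (fun x _ => abs_nonneg _)
    calc u t ^ 2 = |u t| ^ 2 := (sq_abs _).symm
      _ ≤ I ^ 2 := by nlinarith [abs_nonneg (u t)]
      _ ≤ a * J := hCS
  have hcont : Continuous u :=
    continuous_iff_continuousAt.2 fun t => (hd t).continuousAt
  have hci : IntervalIntegrable (fun t => u t ^ 2) volume 0 a :=
    ((hcont.pow 2)).intervalIntegrable 0 a
  calc ∫ t in (0:ℝ)..a, u t ^ 2 ≤ ∫ _t in (0:ℝ)..a, a * J :=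
      intervalIntegral.integral_mono_on ha hci intervalIntegrable_const hpt
    _ = a * (a * J) := by rw [intervalIntegral.integral_const]; simp
    _ = a^2 * J := by ring

lemma final_arith_aux (n a b u : ℝ) (hn : 0 ≤ n) (ha : a ≤ n^2 * b) (hb : 0 ≤ b)
    (hu : 0 ≤ u) : n*(a+b) / (2*(n^2+1)) ≤ (1/2)*(n*b) + u := by
  rw [div_le_iff₀ (by positivity)]
  nlinarith [mul_le_mul_of_nonneg_left ha hn, mul_nonneg hn hb,
    mul_nonneg (mul_nonneg hn hb) (sq_nonneg n)]

set_option maxHeartbeats 2000000 in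
/-- Coercivity of the action on choreographic loops: for an `N`-periodic `H¹` choreography
`z_j(t) = z_0(t + j)` of `N` unit masses whose first component has vanishing real part and
vanishing imaginary part somewhere on `[0,N]`, the Lagrangian action
`A(z) = ∫₀ᴺ (½ Σ_j |ż_j|² + Σ_{j<k} |z_j - z_k|⁻¹)` satisfies
`A(z) ≥ ‖z‖²_{H¹} / (2(N²+1))`. -/
theorem action_coercive (N : ℕ) (hN : 3 ≤ N) (z z' : Fin N → ℝ → ℂ)
    (hderiv : ∀ j t, HasDerivAt (z j) (z' j t) t)
    (hper : ∀ (j : Fin N) (t : ℝ), z j (t + N) = z j t)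
    (hchor : ∀ (j : Fin N) (t : ℝ), z j t = z ⟨0, by omega⟩ (t + ((j : ℕ) : ℝ)))
    (hre : ∃ s ∈ Set.Icc (0:ℝ) N, (z ⟨0, by omega⟩ s).re = 0)
    (him : ∃ s ∈ Set.Icc (0:ℝ) N, (z ⟨0, by omega⟩ s).im = 0)
    (hint0 : ∀ j, IntervalIntegrable (fun t => ‖z' j t‖ ^ 2) volume 0 N)
    (hintU : IntervalIntegrable
      (fun t => ∑ p ∈ Finset.univ.filter (fun p : Fin N × Fin N => p.1 < p.2),
        ‖z p.1 t - z p.2 t‖⁻¹) volume 0 N) :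
    (∫ t in (0:ℝ)..N, ∑ j, (‖z j t‖ ^ 2 + ‖z' j t‖ ^ 2)) / (2 * ((N : ℝ) ^ 2 + 1)) ≤
      ∫ t in (0:ℝ)..N, ((1/2) * ∑ j, ‖z' j t‖ ^ 2 +
        ∑ p ∈ Finset.univ.filter (fun p : Fin N × Fin N => p.1 < p.2),
          ‖z p.1 t - z p.2 t‖⁻¹) := by
  have hN0 : (0:ℕ) < N := by omega
  set j0 : Fin N := ⟨0, hN0⟩ with hj0
  set f : ℝ → ℂ := z j0 with hf
  set f' : ℝ → ℂ := z' j0 with hf'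
  have hNR : (0:ℝ) ≤ (N:ℝ) := Nat.cast_nonneg N
  have hd0 : ∀ t, HasDerivAt f (f' t) t := hderiv j0
  -- derivative of shifted function
  have hshift : ∀ (c : ℝ) (t : ℝ), HasDerivAt (fun s => f (s + c)) (f' (t + c)) t :=
    fun c t => (hd0 (t + c)).comp_add_const t c
  -- z' j t = f' (t + j)
  have hf'eq : ∀ (j : Fin N) (t : ℝ), z' j t = f' (t + (j : ℕ)) := by
    intro j t
    have hzj : z j = fun s => f (s + (j : ℕ)) := funext fun s => hchor j s
    have h1 : HasDerivAt (z j) (f' (t + (j : ℕ))) t := by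
      rw [hzj]; exact hshift _ t
    exact (hderiv j t).unique h1
  -- periodicity of f'
  have hf'per : ∀ t, f' (t + (N:ℝ)) = f' t := by
    intro t
    have hfp : f = fun s => f (s + (N:ℝ)) := funext fun s => (hper j0 s).symm
    have h1 : HasDerivAt f (f' (t + (N:ℝ))) t := by
      have h2 := hshift (N:ℝ) t
      rw [← hfp] at h2
      exact h2
    exact h1.unique (hd0 t)
  -- continuity
  have hcontz : ∀ j : Fin N, Continuous (z j) := fun j =>
    continuous_iff_continuousAt.2 fun t => (hderiv j t).continuousAt
  have hcontsq : ∀ j : Fin N, IntervalIntegrable (fun t => ‖z j t‖ ^ 2) volume 0 N :=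
    fun j => (((hcontz j).norm.pow 2)).intervalIntegrable 0 N
  -- shift invariance of integrals
  have hshift_int : ∀ (g : ℝ → ℝ), Function.Periodic g (N:ℝ) → ∀ (c : ℝ),
      (∫ t in (0:ℝ)..N, g (t + c)) = ∫ t in (0:ℝ)..N, g t := by
    intro g hg c
    rw [intervalIntegral.integral_comp_add_right]
    have := hg.intervalIntegral_add_eq c 0
    simpa [zero_add, add_comm] using this
  have hpersq : Function.Periodic (fun t => ‖f t‖ ^ 2) (N:ℝ) := fun t => by
    simp only [hper j0 t, hf]
  have hpersq' : Function.Periodic (fun t => ‖f' t‖ ^ 2) (N:ℝ) := fun t => by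
    simp only [hf'per t]
  have hintA : ∀ j : Fin N, (∫ t in (0:ℝ)..N, ‖z j t‖ ^ 2) = ∫ t in (0:ℝ)..N, ‖f t‖ ^ 2 := by
    intro j
    have h1 : (fun t => ‖z j t‖ ^ 2) = fun t => ‖f (t + (j:ℕ))‖ ^ 2 :=
      funext fun t => by rw [hchor j t]
    rw [h1]
    exact hshift_int _ hpersq _
  have hintB : ∀ j : Fin N, (∫ t in (0:ℝ)..N, ‖z' j t‖ ^ 2) = ∫ t in (0:ℝ)..N, ‖f' t‖ ^ 2 := by
    intro j
    have h1 : (fun t => ‖z' j t‖ ^ 2) = fun t => ‖f' (t + (j:ℕ))‖ ^ 2 :=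
      funext fun t => by rw [hf'eq j t]
    rw [h1]
    exact hshift_int _ hpersq' _
  set A := ∫ t in (0:ℝ)..N, ‖f t‖ ^ 2 with hA
  set B := ∫ t in (0:ℝ)..N, ‖f' t‖ ^ 2 with hB
  -- measurability of f'
  have hmeasf' : Measurable f' := by
    have : f' = deriv f := funext fun t => ((hd0 t).deriv).symm
    rw [this]
    exact measurable_deriv f
  have hintf'2 : IntervalIntegrable (fun t => ‖f' t‖ ^ 2) volume 0 N := hint0 j0
  -- integrability of re/im parts of f'
  have hpartsq : ∀ (p : ℂ → ℝ), (∀ w : ℂ, |p w| ≤ ‖w‖) → Measurable p →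
      IntervalIntegrable (fun t => p (f' t) ^ 2) volume 0 N ∧
      IntervalIntegrable (fun t => p (f' t)) volume 0 N := by
    intro p hp hpm
    have hm : Measurable fun t => p (f' t) := hpm.comp hmeasf'
    constructor
    · refine hintf'2.mono_fun ((hm.pow_const 2).aestronglyMeasurable) ?_
      refine Filter.Eventually.of_forall fun t => ?_
      have h4 : p (f' t) ^ 2 ≤ ‖f' t‖ ^ 2 := by
        rw [← sq_abs]
        exact pow_le_pow_left₀ (abs_nonneg _) (hp (f' t)) 2
      simp only [Real.norm_eq_abs, abs_pow, sq_abs, abs_norm]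
      exact h4
    · have hint1 : IntervalIntegrable (fun t => 1 + ‖f' t‖ ^ 2) volume 0 N :=
        intervalIntegrable_const.add hintf'2
      refine hint1.mono_fun hm.aestronglyMeasurable ?_
      refine Filter.Eventually.of_forall fun t => ?_
      have h1 := hp (f' t)
      have h2 : ‖f' t‖ ≤ 1 + ‖f' t‖ ^ 2 := by nlinarith [norm_nonneg (f' t)]
      have h3 : (0:ℝ) ≤ 1 + ‖f' t‖ ^ 2 := by positivity
      simp only [Real.norm_eq_abs]
      rw [abs_of_nonneg h3]
      exact h1.trans h2
  obtain ⟨hre2, hre1⟩ := hpartsq Complex.re (fun w => Complex.abs_re_le_norm w) Complex.measurable_re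
  obtain ⟨him2, him1⟩ := hpartsq Complex.im (fun w => Complex.abs_im_le_norm w) Complex.measurable_im
  -- derivatives of re/im of f
  have hdre : ∀ t, HasDerivAt (fun s => (f s).re) ((f' t).re) t := by
    intro t
    have := (Complex.reCLM.hasFDerivAt (x := f t)).comp_hasDerivAt t (hd0 t)
    exact this
  have hdim : ∀ t, HasDerivAt (fun s => (f s).im) ((f' t).im) t := by
    intro t
    have := (Complex.imCLM.hasFDerivAt (x := f t)).comp_hasDerivAt t (hd0 t)
    exact this
  -- Poincaré for re and im parts
  have hPre := poincare_aux N hNR (fun s => (f s).re) (fun t => (f' t).re)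
    hdre hre2 hre1 hre
  have hPim := poincare_aux N hNR (fun s => (f s).im) (fun t => (f' t).im)
    hdim him2 him1 him
  -- splitting of the norms
  have hnormsplit : ∀ w : ℂ, ‖w‖ ^ 2 = w.re ^ 2 + w.im ^ 2 := fun w => by
    rw [Complex.sq_norm, Complex.normSq_apply]
    ring
  have hcontf : Continuous f := hcontz j0
  have hcre : IntervalIntegrable (fun t => (f t).re ^ 2) volume 0 (N:ℝ) :=
    ((Complex.continuous_re.comp hcontf).pow 2).intervalIntegrable 0 (N:ℝ)
  have hcim : IntervalIntegrable (fun t => (f t).im ^ 2) volume 0 (N:ℝ) :=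
    ((Complex.continuous_im.comp hcontf).pow 2).intervalIntegrable 0 (N:ℝ)
  have hAsplit : A = (∫ t in (0:ℝ)..N, (f t).re ^ 2) + ∫ t in (0:ℝ)..N, (f t).im ^ 2 := by
    rw [hA, ← intervalIntegral.integral_add hcre hcim]
    exact intervalIntegral.integral_congr fun t _ => hnormsplit (f t)
  have hBsplit : B = (∫ t in (0:ℝ)..N, (f' t).re ^ 2) + ∫ t in (0:ℝ)..N, (f' t).im ^ 2 := by
    rw [hB, ← intervalIntegral.integral_add hre2 him2]
    exact intervalIntegral.integral_congr fun t _ => hnormsplit (f' t)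
  have hAB : A ≤ (N:ℝ)^2 * B := by
    rw [hAsplit, hBsplit]
    calc (∫ t in (0:ℝ)..N, (f t).re ^ 2) + ∫ t in (0:ℝ)..N, (f t).im ^ 2
        ≤ (N:ℝ)^2 * (∫ t in (0:ℝ)..N, (f' t).re ^ 2)
          + (N:ℝ)^2 * (∫ t in (0:ℝ)..N, (f' t).im ^ 2) := add_le_add hPre hPim
      _ = _ := by ring
  have hB0 : 0 ≤ B :=
    intervalIntegral.integral_nonneg hNR (fun t _ => by positivity)
  -- rewriting both sides
  have hsumint : ∀ j : Fin N, IntervalIntegrable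
      (fun t => ‖z j t‖ ^ 2 + ‖z' j t‖ ^ 2) volume 0 N :=
    fun j => (hcontsq j).add (hint0 j)
  have hS : IntervalIntegrable (fun t => ∑ j, ‖z' j t‖ ^ 2) volume 0 N := by
    have h1 := IntervalIntegrable.sum (μ := volume) (a := (0:ℝ)) (b := (N:ℝ))
      (f := fun (j : Fin N) => fun t => ‖z' j t‖ ^ 2) Finset.univ (fun j _ => hint0 j)
    have h2 : (∑ j : Fin N, fun t => ‖z' j t‖ ^ 2) = fun t => ∑ j, ‖z' j t‖ ^ 2 := by
      funext t
      simp [Finset.sum_apply]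
    rwa [h2] at h1
  have hLHS : (∫ t in (0:ℝ)..N, ∑ j, (‖z j t‖ ^ 2 + ‖z' j t‖ ^ 2))
      = (N:ℝ) * (A + B) := by
    rw [intervalIntegral.integral_finset_sum (fun j _ => hsumint j)]
    have : ∀ j : Fin N, (∫ t in (0:ℝ)..N, (‖z j t‖ ^ 2 + ‖z' j t‖ ^ 2)) = A + B := by
      intro j
      rw [intervalIntegral.integral_add (hcontsq j) (hint0 j), hintA j, hintB j]
    rw [Finset.sum_congr rfl fun j _ => this j]
    simp only [Finset.sum_const, Finset.card_univ, Fintype.card_fin, nsmul_eq_mul]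
  have hSval : (∫ t in (0:ℝ)..N, ∑ j, ‖z' j t‖ ^ 2) = (N:ℝ) * B := by
    rw [intervalIntegral.integral_finset_sum (fun j _ => hint0 j)]
    rw [Finset.sum_congr rfl fun j _ => hintB j]
    simp [Finset.card_univ, mul_comm]
  have hU0 : 0 ≤ ∫ t in (0:ℝ)..N,
      ∑ p ∈ Finset.univ.filter (fun p : Fin N × Fin N => p.1 < p.2),
        ‖z p.1 t - z p.2 t‖⁻¹ :=
    intervalIntegral.integral_nonneg hNR (fun t _ =>
      Finset.sum_nonneg fun p _ => by positivity)
  have hRHS : (∫ t in (0:ℝ)..N, ((1/2) * ∑ j, ‖z' j t‖ ^ 2 +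
        ∑ p ∈ Finset.univ.filter (fun p : Fin N × Fin N => p.1 < p.2),
          ‖z p.1 t - z p.2 t‖⁻¹))
      = (1/2) * ((N:ℝ) * B) + ∫ t in (0:ℝ)..N,
          ∑ p ∈ Finset.univ.filter (fun p : Fin N × Fin N => p.1 < p.2),
            ‖z p.1 t - z p.2 t‖⁻¹ := by
    rw [intervalIntegral.integral_add (hS.const_mul _) hintU,
      intervalIntegral.integral_const_mul, hSval]
  rw [hLHS, hRHS]
  exact final_arith_aux (N:ℝ) A B _ hNR hAB hB0 hU0
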